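/- Let Θ_i, Θ_j, Θ_k ∈ [0, π) satisfy cos Θ_i + cos Θ_j cos Θ_k ≥ 0, cos Θ_j + cos Θ_k cos Θ_i ≥ 0, and cos Θ_k + cos Θ_i cos Θ_j ≥ 0. Then Θ_i + Θ_j ≤ π, Θ_j + Θ_k ≤ π, and Θ_k + Θ_i ≤ π. -/
import Mathlib

open Real

lemma cos_gt_neg_one_of_Ico (a : ℝ) (ha : a ∈ Set.Ico 0 π) : -1 < Real.cos a := by
  have := Real.strictAntiOn_cos ⟨ha.1, ha.2.le⟩ ⟨Real.pi_pos.le, le_refl π⟩ ha.2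
  rwa [Real.cos_pi] at this

lemma pair_sum_le_pi (a b : ℝ) (ha : a ∈ Set.Ico 0 π) (hb : b ∈ Set.Ico 0 π)
    (h : 0 ≤ Real.cos a + Real.cos b) : a + b ≤ π := by
  by_contra hlt
  push_neg at hlt
  have h1 : π - a ∈ Set.Icc (0:ℝ) π := ⟨by linarith [hb.2, ha.2], by linarith [ha.1]⟩
  have h2 : b ∈ Set.Icc (0:ℝ) π := ⟨hb.1, hb.2.le⟩
  have := Real.strictAntiOn_cos h1 h2 (by linarith)
  rw [Real.cos_pi_sub] at this
  linarith

theorem pairwise_angle_sums_le_pi_of_gram_cofactors_nonneg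
    (Θi Θj Θk : ℝ)
    (hi : Θi ∈ Set.Ico 0 π) (hj : Θj ∈ Set.Ico 0 π) (hk : Θk ∈ Set.Ico 0 π)
    (hγi : 0 ≤ Real.cos Θi + Real.cos Θj * Real.cos Θk)
    (hγj : 0 ≤ Real.cos Θj + Real.cos Θk * Real.cos Θi)
    (hγk : 0 ≤ Real.cos Θk + Real.cos Θi * Real.cos Θj) :
    Θi + Θj ≤ π ∧ Θj + Θk ≤ π ∧ Θk + Θi ≤ π := by
  have ci := cos_gt_neg_one_of_Ico Θi hi
  have cj := cos_gt_neg_one_of_Ico Θj hj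
  have ck := cos_gt_neg_one_of_Ico Θk hk
  refine ⟨pair_sum_le_pi _ _ hi hj ?_, pair_sum_le_pi _ _ hj hk ?_, pair_sum_le_pi _ _ hk hi ?_⟩
  · nlinarith [add_nonneg hγi hγj]
  · nlinarith [add_nonneg hγj hγk]
  · nlinarith [add_nonneg hγk hγi]
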